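/- Let L be a finite bounded lattice and x an element with 0 < x < 1. Let P = L \ Co(x), where Co(x) is the set of complements of x in L, and let P̄ = P \ {0,1}. Then the order complex Δ(P̄) is nonevasive (in particular, collapsible and contractible). -/

import Mathlib

open scoped Classical

/-- An abstract simplicial complex as a finite family of nonempty finite faces,
closed under taking nonempty subsets, containing all its vertices as singletons. -/
def IsComplex {V : Type*} (K : Finset (Finset V)) : Prop :=
  (∀ σ ∈ K, σ.Nonempty) ∧ (∀ σ ∈ K, ∀ τ ⊆ σ, τ.Nonempty → τ ∈ K)

/-- The deletion of a vertex from a simplicial complex. -/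
noncomputable def dlF {V : Type*} (K : Finset (Finset V)) (v : V) : Finset (Finset V) :=
  K.filter fun σ => v ∉ σ

/-- The link of a vertex in a simplicial complex. -/
noncomputable def lkF {V : Type*} (K : Finset (Finset V)) (v : V) : Finset (Finset V) :=
  K.filter fun σ => v ∉ σ ∧ insert v σ ∈ K

/-- Nonevasiveness: a point is nonevasive, and `K` is nonevasive if some vertex has
nonevasive link and deletion. -/
inductive Nonevasive {V : Type*} : Finset (Finset V) → Prop
  | point (v : V) : Nonevasive {{v}}
  | step (K : Finset (Finset V)) (v : V) (hv : {v} ∈ K)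
      (hlk : Nonevasive (lkF K v)) (hdl : Nonevasive (dlF K v)) : Nonevasive K

/-- Collapsibility: `K` can be reduced to a point by elementary collapses, where an
elementary collapse removes a pair `(σ, τ)` with `σ` a proper face of exactly one face `τ`. -/
inductive Collapsible {V : Type*} : Finset (Finset V) → Prop
  | point (v : V) : Collapsible {{v}}
  | collapse (K : Finset (Finset V)) (σ τ : Finset V) (hσ : σ ∈ K) (hτ : τ ∈ K)
      (hst : σ ⊂ τ) (huniq : ∀ ρ ∈ K, σ ⊂ ρ → ρ = τ)
      (h : Collapsible (K \ {σ, τ})) : Collapsible K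

/-- The order complex of the subposet `S` of `P`: faces are the nonempty chains in `S`. -/
noncomputable def orderComplexOn (P : Type*) [Fintype P] [PartialOrder P] (S : Set P) :
    Finset (Finset P) :=
  Finset.univ.filter fun σ => σ.Nonempty ∧ ↑σ ⊆ S ∧ IsChain (· ≤ ·) (σ : Set P)

section General
variable {V : Type*}

lemma isComplex_lkF {K : Finset (Finset V)} (hK : IsComplex K) (v : V) :
    IsComplex (lkF K v) := by
  constructor
  · intro σ hσ
    exact hK.1 σ (Finset.mem_filter.mp hσ).1
  · intro σ hσ τ hτ hτne
    simp only [lkF, Finset.mem_filter] at hσ ⊢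
    obtain ⟨hσK, hvσ, hins⟩ := hσ
    refine ⟨hK.2 σ hσK τ hτ hτne, fun h => hvσ (hτ h), ?_⟩
    exact hK.2 _ hins _ (Finset.insert_subset_insert v hτ) ⟨v, Finset.mem_insert_self v τ⟩

lemma isComplex_dlF {K : Finset (Finset V)} (hK : IsComplex K) (v : V) :
    IsComplex (dlF K v) := by
  constructor
  · intro σ hσ
    exact hK.1 σ (Finset.mem_filter.mp hσ).1
  · intro σ hσ τ hτ hτne
    simp only [dlF, Finset.mem_filter] at hσ ⊢
    exact ⟨hK.2 σ hσ.1 τ hτ hτne, fun h => hσ.2 (hτ h)⟩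

/-- A cone with apex `v`. -/
def IsCone (v : V) (K : Finset (Finset V)) : Prop :=
  {v} ∈ K ∧ ∀ σ ∈ K, insert v σ ∈ K

lemma cone_nonevasive_aux : ∀ (n : ℕ) (K : Finset (Finset V)) (v : V),
    K.card ≤ n → IsComplex K → IsCone v K → Nonevasive K := by
  intro n
  induction n with
  | zero =>
    intro K v hcard _ hcone
    exact absurd (Finset.card_eq_zero.mp (Nat.le_zero.mp hcard) ▸ hcone.1)
      (Finset.notMem_empty _)
  | succ n ih =>
    intro K v hcard hK hcone
    by_cases hKv : K = {{v}}
    · rw [hKv]; exact Nonevasive.point v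
    · -- find a vertex u ≠ v
      have hex : ∃ σ ∈ K, σ ≠ {v} := by
        by_contra h
        push_neg at h
        apply hKv
        apply Finset.Subset.antisymm
        · intro σ hσ; simpa using h σ hσ
        · intro σ hσ
          simp only [Finset.mem_singleton] at hσ
          exact hσ ▸ hcone.1
      obtain ⟨σ, hσK, hσv⟩ := hex
      have : ∃ u ∈ σ, u ≠ v := by
        by_contra h
        push_neg at h
        apply hσv
        apply Finset.Subset.antisymm
        · intro a ha; simp [h a ha]
        · intro a ha
          simp only [Finset.mem_singleton] at ha
          obtain ⟨w, hw⟩ := hK.1 σ hσK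
          exact ha ▸ (h w hw ▸ hw)
      obtain ⟨u, huσ, huv⟩ := this
      have huK : {u} ∈ K := hK.2 σ hσK {u} (Finset.singleton_subset_iff.mpr huσ)
        ⟨u, Finset.mem_singleton_self u⟩
      have hvK := hcone.1
      -- {u,v} ∈ K
      have huvK : insert u {v} ∈ K := by
        rw [show (insert u {v} : Finset V) = insert v {u} from Finset.pair_comm u v]
        exact hcone.2 {u} huK
      refine Nonevasive.step K u huK ?_ ?_
      · -- link of u is a cone with apex v
        refine ih (lkF K u) v ?_ (isComplex_lkF hK u) ?_
        · have hss : lkF K u ⊂ K := by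
            refine Finset.ssubset_iff_of_subset (Finset.filter_subset _ _) |>.mpr ⟨{u}, huK, ?_⟩
            simp only [lkF, Finset.mem_filter]
            rintro ⟨-, h, -⟩
            exact h (Finset.mem_singleton_self u)
          have := Finset.card_lt_card hss
          omega
        · constructor
          · simp only [lkF, Finset.mem_filter]
            refine ⟨hvK, by simpa using huv, huvK⟩
          · intro ρ hρ
            simp only [lkF, Finset.mem_filter] at hρ ⊢
            obtain ⟨hρK, huρ, hiρ⟩ := hρ
            refine ⟨hcone.2 ρ hρK, ?_, ?_⟩
            · simp only [Finset.mem_insert]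
              rintro (h | h)
              exacts [huv h, huρ h]
            · rw [Finset.insert_comm]
              exact hcone.2 _ hiρ
      · refine ih (dlF K u) v ?_ (isComplex_dlF hK u) ?_
        · have hss : dlF K u ⊂ K := by
            refine Finset.ssubset_iff_of_subset (Finset.filter_subset _ _) |>.mpr ⟨{u}, huK, ?_⟩
            simp only [dlF, Finset.mem_filter]
            rintro ⟨-, h⟩
            exact h (Finset.mem_singleton_self u)
          have := Finset.card_lt_card hss
          omega
        · constructor
          · simp only [dlF, Finset.mem_filter]
            exact ⟨hvK, by simpa using huv⟩
          · intro ρ hρ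
            simp only [dlF, Finset.mem_filter] at hρ ⊢
            refine ⟨hcone.2 ρ hρ.1, ?_⟩
            simp only [Finset.mem_insert]
            rintro (h | h)
            exacts [huv h, hρ.2 h]

lemma cone_nonevasive {K : Finset (Finset V)} {v : V} (hK : IsComplex K)
    (hcone : IsCone v K) : Nonevasive K :=
  cone_nonevasive_aux K.card K v le_rfl hK hcone

end General

section Collapse
variable {V : Type*}

inductive CollapsesTo : Finset (Finset V) → Finset (Finset V) → Prop
  | refl (K : Finset (Finset V)) : CollapsesTo K K
  | collapse (K K' : Finset (Finset V)) (σ τ : Finset V) (hσ : σ ∈ K) (hτ : τ ∈ K)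
      (hst : σ ⊂ τ) (huniq : ∀ ρ ∈ K, σ ⊂ ρ → ρ = τ)
      (h : CollapsesTo (K \ {σ, τ}) K') : CollapsesTo K K'

lemma CollapsesTo.collapsible {K K' : Finset (Finset V)} (h : CollapsesTo K K')
    (h' : Collapsible K') : Collapsible K := by
  induction h with
  | refl K => exact h'
  | collapse K K'' σ τ hσ hτ hst huniq h ih =>
    exact Collapsible.collapse K σ τ hσ hτ hst huniq (ih h')

lemma isComplex_sdiff_pair {K : Finset (Finset V)} (hK : IsComplex K)
    {σ τ : Finset V} (hst : σ ⊂ τ) (huniq : ∀ ρ ∈ K, σ ⊂ ρ → ρ = τ) :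
    IsComplex (K \ {σ, τ}) := by
  constructor
  · intro ρ hρ
    exact hK.1 ρ (Finset.mem_sdiff.mp hρ).1
  · intro ρ hρ η hη hηne
    rw [Finset.mem_sdiff] at hρ ⊢
    obtain ⟨hρK, hρmem⟩ := hρ
    simp only [Finset.mem_insert, Finset.mem_singleton] at hρmem
    push_neg at hρmem
    refine ⟨hK.2 ρ hρK η hη hηne, ?_⟩
    simp only [Finset.mem_insert, Finset.mem_singleton]
    push_neg
    constructor
    · rintro rfl
      exact hρmem.2 (huniq ρ hρK (lt_of_le_of_ne hη (Ne.symm hρmem.1)))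
    · rintro rfl
      exact hρmem.2 (huniq ρ hρK (lt_of_lt_of_le hst hη))
end Collapse

section NEC
variable {V : Type*}

lemma faces_with_vertex {K : Finset (Finset V)} (hK : IsComplex K) {v : V}
    {ρ : Finset V} (hρ : ρ ∈ K) (hvρ : v ∈ ρ) (hne : ρ ≠ {v}) :
    ρ.erase v ∈ lkF K v ∧ ρ = insert v (ρ.erase v) := by
  have h2 : ρ = insert v (ρ.erase v) := (Finset.insert_erase hvρ).symm
  have hne' : (ρ.erase v).Nonempty := by
    rcases Finset.eq_empty_or_nonempty (ρ.erase v) with h | h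
    · exact absurd (by rw [h2, h]; rfl) hne
    · exact h
  refine ⟨?_, h2⟩
  simp only [lkF, Finset.mem_filter]
  exact ⟨hK.2 ρ hρ _ (Finset.erase_subset v ρ) hne', Finset.notMem_erase v ρ,
    by rw [← h2]; exact hρ⟩

lemma collapsesTo_dl (v : V) (M : Finset (Finset V)) (hM : Collapsible M) :
    ∀ K : Finset (Finset V), IsComplex K → lkF K v = M → CollapsesTo K (dlF K v) := by
  induction hM with
  | point w =>
    intro K hK hlk
    have hw : ({w} : Finset V) ∈ lkF K v := by rw [hlk]; exact Finset.mem_singleton_self _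
    simp only [lkF, Finset.mem_filter] at hw
    obtain ⟨hwK, hvw, hiw⟩ := hw
    have hwv : w ≠ v := fun h => hvw (by rw [h]; exact Finset.mem_singleton_self v)
    have hvK : ({v} : Finset V) ∈ K :=
      hK.2 _ hiw {v} (Finset.singleton_subset_iff.mpr (Finset.mem_insert_self v _))
        ⟨v, Finset.mem_singleton_self v⟩
    -- every face containing v is {v} or {v, w}
    have hA : ∀ ρ ∈ K, v ∈ ρ → ρ = {v} ∨ ρ = insert v {w} := by
      intro ρ hρ hvρ
      rcases eq_or_ne ρ {v} with h | h
      · exact Or.inl h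
      · obtain ⟨h1, h2⟩ := faces_with_vertex hK hρ hvρ h
        rw [hlk, Finset.mem_singleton] at h1
        exact Or.inr (by rw [h2, h1])
    have hst : ({v} : Finset V) ⊂ insert v {w} := by
      refine (Finset.ssubset_iff_of_subset ?_).mpr ⟨w, ?_, ?_⟩
      · exact Finset.singleton_subset_iff.mpr (Finset.mem_insert_self v _)
      · simp
      · simpa using hwv
    have huniq : ∀ ρ ∈ K, ({v} : Finset V) ⊂ ρ → ρ = insert v {w} := by
      intro ρ hρ hsub
      rcases hA ρ hρ (hsub.1 (Finset.mem_singleton_self v)) with h | h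
      · exact absurd h.symm (ne_of_ssubset hsub)
      · exact h
    have hrest : K \ {{v}, insert v {w}} = dlF K v := by
      ext ρ
      simp only [Finset.mem_sdiff, dlF, Finset.mem_filter, Finset.mem_insert,
        Finset.mem_singleton]
      constructor
      · rintro ⟨hρ, hmem⟩
        push_neg at hmem
        refine ⟨hρ, fun hv' => ?_⟩
        rcases hA ρ hρ hv' with h | h
        exacts [hmem.1 h, hmem.2 h]
      · rintro ⟨hρ, hv'⟩
        refine ⟨hρ, ?_⟩
        push_neg
        constructor
        · rintro rfl; exact hv' (Finset.mem_singleton_self v)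
        · rintro rfl; exact hv' (Finset.mem_insert_self v _)
    refine CollapsesTo.collapse K _ {v} (insert v {w}) hvK hiw hst huniq ?_
    rw [hrest]
    exact CollapsesTo.refl _
  | collapse M σ τ hσ hτ hst huniq h ih =>
    intro K hK hlk
    rw [← hlk] at hσ hτ huniq
    simp only [lkF, Finset.mem_filter] at hσ hτ
    obtain ⟨hσK, hvσ, hiσ⟩ := hσ
    obtain ⟨hτK, hvτ, hiτ⟩ := hτ
    have hst' : insert v σ ⊂ insert v τ := by
      refine (Finset.ssubset_iff_of_subset (Finset.insert_subset_insert v hst.subset)).mpr ?_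
      obtain ⟨e, heτ, heσ⟩ := Finset.exists_of_ssubset hst
      refine ⟨e, Finset.mem_insert_of_mem heτ, ?_⟩
      simp only [Finset.mem_insert]
      push_neg
      exact ⟨fun h' => hvτ (h' ▸ heτ), heσ⟩
    have hσne : σ.Nonempty := hK.1 σ hσK
    have huniq' : ∀ ρ ∈ K, insert v σ ⊂ ρ → ρ = insert v τ := by
      intro ρ hρ hsub
      have hvρ : v ∈ ρ := hsub.1 (Finset.mem_insert_self v σ)
      have hρne : ρ ≠ {v} := by
        rintro rfl
        obtain ⟨s, hs⟩ := hσne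
        have := hsub.1 (Finset.mem_insert_of_mem hs)
        rw [Finset.mem_singleton] at this
        exact hvσ (this ▸ hs)
      obtain ⟨h1, h2⟩ := faces_with_vertex hK hρ hvρ hρne
      have hσρ : σ ⊆ ρ.erase v := by
        intro q hq
        exact Finset.mem_erase.mpr ⟨fun h' => hvσ (h' ▸ hq), hsub.1 (Finset.mem_insert_of_mem hq)⟩
      have hσρ' : σ ≠ ρ.erase v := by
        rintro hh
        rw [h2, ← hh] at hsub
        exact (ne_of_ssubset hsub) rfl
      have := huniq _ h1 (lt_of_le_of_ne hσρ hσρ')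
      rw [h2, this]
    set K' := K \ {insert v σ, insert v τ} with hK'def
    have hK' : IsComplex K' := isComplex_sdiff_pair hK hst' huniq'
    have hlk' : lkF K' v = M \ {σ, τ} := by
      ext ρ
      simp only [lkF, Finset.mem_filter, hK'def, Finset.mem_sdiff, Finset.mem_insert,
        Finset.mem_singleton]
      constructor
      · rintro ⟨⟨hρK, hρmem⟩, hvρ, ⟨hiρ, hiρmem⟩⟩
        push_neg at hρmem hiρmem
        have hmem : ρ ∈ lkF K v := by
          simp only [lkF, Finset.mem_filter]; exact ⟨hρK, hvρ, hiρ⟩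
        rw [hlk] at hmem
        refine ⟨hmem, ?_⟩
        push_neg
        constructor
        · rintro rfl; exact hiρmem.1 rfl
        · rintro rfl; exact hiρmem.2 rfl
      · rintro ⟨hρM, hρmem⟩
        push_neg at hρmem
        rw [← hlk] at hρM
        simp only [lkF, Finset.mem_filter] at hρM
        obtain ⟨hρK, hvρ, hiρ⟩ := hρM
        refine ⟨⟨hρK, ?_⟩, hvρ, hiρ, ?_⟩
        · push_neg
          constructor
          · rintro rfl; exact hvρ (Finset.mem_insert_self v σ)
          · rintro rfl; exact hvρ (Finset.mem_insert_self v τ)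
        · push_neg
          constructor
          · intro hh
            exact hρmem.1 (by
              have := congrArg (fun s => Finset.erase s v) hh
              simpa [Finset.erase_insert, hvρ, hvσ] using this)
          · intro hh
            exact hρmem.2 (by
              have := congrArg (fun s => Finset.erase s v) hh
              simpa [Finset.erase_insert, hvρ, hvτ] using this)
    have hdl' : dlF K' v = dlF K v := by
      ext ρ
      simp only [dlF, Finset.mem_filter, hK'def, Finset.mem_sdiff, Finset.mem_insert,
        Finset.mem_singleton]
      constructor
      · rintro ⟨⟨hρK, -⟩, hvρ⟩; exact ⟨hρK, hvρ⟩
      · rintro ⟨hρK, hvρ⟩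
        refine ⟨⟨hρK, ?_⟩, hvρ⟩
        push_neg
        constructor
        · rintro rfl; exact hvρ (Finset.mem_insert_self v σ)
        · rintro rfl; exact hvρ (Finset.mem_insert_self v τ)
    have hrec := ih K' hK' hlk'
    rw [hdl'] at hrec
    exact CollapsesTo.collapse K _ (insert v σ) (insert v τ) hiσ hiτ hst' huniq' hrec

lemma Nonevasive.toCollapsible {K : Finset (Finset V)} (h : Nonevasive K) :
    IsComplex K → Collapsible K := by
  induction h with
  | point v => exact fun _ => Collapsible.point v
  | step K v hv hlk hdl ihlk ihdl =>
    intro hK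
    exact (collapsesTo_dl v _ (ihlk (isComplex_lkF hK v)) K hK rfl).collapsible
      (ihdl (isComplex_dlF hK v))

end NEC

section OC
variable {P : Type*} [Fintype P] [PartialOrder P]

lemma mem_oc {S : Set P} {σ : Finset P} :
    σ ∈ orderComplexOn P S ↔ σ.Nonempty ∧ ↑σ ⊆ S ∧ IsChain (· ≤ ·) (σ : Set P) := by
  simp [orderComplexOn]

lemma isComplex_oc (S : Set P) : IsComplex (orderComplexOn P S) := by
  constructor
  · intro σ hσ; exact (mem_oc.mp hσ).1
  · intro σ hσ τ hτ hτne
    obtain ⟨-, hsub, hch⟩ := mem_oc.mp hσ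
    exact mem_oc.mpr ⟨hτne, fun q hq => hsub (Finset.coe_subset.mpr hτ hq),
      IsChain.mono (Finset.coe_subset.mpr hτ) hch⟩

lemma singleton_mem_oc {S : Set P} {v : P} (hv : v ∈ S) :
    ({v} : Finset P) ∈ orderComplexOn P S :=
  mem_oc.mpr ⟨⟨v, Finset.mem_singleton_self v⟩, by simpa using hv,
    by simp⟩

lemma dlF_oc (S : Set P) (v : P) :
    dlF (orderComplexOn P S) v = orderComplexOn P (S \ {v}) := by
  ext σ
  simp only [dlF, Finset.mem_filter, mem_oc]
  constructor
  · rintro ⟨⟨hne, hsub, hch⟩, hv⟩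
    refine ⟨hne, fun q hq => ⟨hsub hq, fun h => hv ?_⟩, hch⟩
    rw [Set.mem_singleton_iff] at h
    exact h ▸ hq
  · rintro ⟨hne, hsub, hch⟩
    refine ⟨⟨hne, fun q hq => (hsub hq).1, hch⟩, fun hv => ?_⟩
    exact (hsub hv).2 rfl

lemma lkF_oc (S : Set P) (v : P) (hvS : v ∈ S) (htop : ∀ q ∈ S, ¬ v < q) :
    lkF (orderComplexOn P S) v = orderComplexOn P {q | q ∈ S ∧ q < v} := by
  ext σ
  simp only [lkF, Finset.mem_filter, mem_oc]
  constructor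
  · rintro ⟨⟨hne, hsub, hch⟩, hvσ, ⟨-, hsub', hch'⟩⟩
    refine ⟨hne, fun q hq => ⟨hsub hq, ?_⟩, hch⟩
    have hqS : q ∈ S := hsub hq
    have hqv : q ≠ v := fun h => hvσ (h ▸ hq)
    have hcomp := hch' (by rw [Finset.coe_insert]; exact Set.mem_insert_of_mem _ hq)
      (by rw [Finset.coe_insert]; exact Set.mem_insert _ _) hqv
    rcases hcomp with h | h
    · exact lt_of_le_of_ne h hqv
    · exact absurd (lt_of_le_of_ne h (Ne.symm hqv)) (htop q hqS)
  · rintro ⟨hne, hsub, hch⟩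
    have hσS : ↑σ ⊆ S := fun q hq => (hsub hq).1
    have hvσ : v ∉ σ := fun h => lt_irrefl v (hsub h).2
    refine ⟨⟨hne, hσS, hch⟩, hvσ, ⟨Finset.insert_nonempty v σ, ?_, ?_⟩⟩
    · rw [Finset.coe_insert]
      exact Set.insert_subset hvS hσS
    · rw [Finset.coe_insert]
      exact IsChain.insert hch fun b hb _ => Or.inr (hsub hb).2.le

lemma isCone_oc_of_min {S : Set P} {m : P} (hm : m ∈ S) (hmin : ∀ q ∈ S, m ≤ q) :
    IsCone m (orderComplexOn P S) := by
  refine ⟨singleton_mem_oc hm, ?_⟩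
  intro σ hσ
  obtain ⟨hne, hsub, hch⟩ := mem_oc.mp hσ
  refine mem_oc.mpr ⟨Finset.insert_nonempty m σ, ?_, ?_⟩
  · rw [Finset.coe_insert]
    exact Set.insert_subset hm hsub
  · rw [Finset.coe_insert]
    exact IsChain.insert hch fun b hb _ => Or.inl (hmin b (hsub hb))

end OC

section Closure
variable {P : Type*} [Fintype P] [PartialOrder P]

lemma closure_nonevasive (c : P → P) (m : P) :
    ∀ (n : ℕ) (S : Set P),
      (Finset.univ.filter fun q => q ∈ S ∧ c q ≠ q).card ≤ n →
      m ∈ S → c m = m →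
      (∀ q ∈ S, c q ∈ S) → (∀ q ∈ S, q ≤ c q) →
      (∀ q ∈ S, ∀ r ∈ S, q ≤ r → c q ≤ c r) →
      (∀ q ∈ S, c (c q) = c q) →
      (∀ q ∈ S, m ≤ c q) →
      Nonevasive (orderComplexOn P S) := by
  intro n
  induction n with
  | zero =>
    intro S hcard hm hmfix hmem hle hmono hidem hmin
    have hfix : ∀ q ∈ S, c q = q := by
      intro q hq
      by_contra h
      have : q ∈ Finset.univ.filter fun q => q ∈ S ∧ c q ≠ q := by
        simp [hq, h]
      rw [Finset.card_eq_zero.mp (Nat.le_zero.mp hcard)] at this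
      exact Finset.notMem_empty q this
    exact cone_nonevasive (isComplex_oc S)
      (isCone_oc_of_min hm fun q hq => (hfix q hq) ▸ hmin q hq)
  | succ n ih =>
    intro S hcard hm hmfix hmem hle hmono hidem hmin
    set T := Finset.univ.filter fun q => q ∈ S ∧ c q ≠ q with hT
    rcases Finset.eq_empty_or_nonempty T with hTe | hTne
    · -- all fixed: cone
      have hfix : ∀ q ∈ S, c q = q := by
        intro q hq
        by_contra h
        have : q ∈ T := by simp [hT, hq, h]
        rw [hTe] at this
        exact Finset.notMem_empty q this
      exact cone_nonevasive (isComplex_oc S)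
        (isCone_oc_of_min hm fun q hq => (hfix q hq) ▸ hmin q hq)
    · obtain ⟨p, hpT, hpmax⟩ := T.exists_maximal hTne
      have hpS : p ∈ S := (Finset.mem_filter.mp hpT).2.1
      have hpfix : c p ≠ p := (Finset.mem_filter.mp hpT).2.2
      have hplt : p < c p := lt_of_le_of_ne (hle p hpS) (Ne.symm hpfix)
      refine Nonevasive.step _ p (singleton_mem_oc hpS) ?_ ?_
      · -- link is a cone with apex c p
        refine cone_nonevasive (isComplex_lkF (isComplex_oc S) p) (v := c p) ⟨?_, ?_⟩
        · simp only [lkF, Finset.mem_filter]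
          refine ⟨singleton_mem_oc (hmem p hpS),
            by simp only [Finset.mem_singleton]; exact ne_of_lt hplt, ?_⟩
          refine mem_oc.mpr ⟨Finset.insert_nonempty _ _, ?_, ?_⟩
          · rw [Finset.coe_insert, Finset.coe_singleton]
            exact Set.insert_subset hpS (Set.singleton_subset_iff.mpr (hmem p hpS))
          · rw [Finset.coe_insert, Finset.coe_singleton]
            exact IsChain.insert (Set.Subsingleton.isChain Set.subsingleton_singleton)
              fun b hb _ => Or.inl (Set.mem_singleton_iff.mp hb ▸ hplt.le)
        · intro σ hσ
          simp only [lkF, Finset.mem_filter] at hσ ⊢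
          obtain ⟨hσoc, hpσ, hiσ⟩ := hσ
          obtain ⟨hne, hsub, hch⟩ := mem_oc.mp hσoc
          obtain ⟨-, hsub2, hch2⟩ := mem_oc.mp hiσ
          -- every element of σ is comparable with c p
          have hcomp : ∀ q ∈ σ, q ≤ c p ∨ c p ≤ q := by
            intro q hq
            have hqS : q ∈ S := hsub hq
            have hqp : q ≠ p := fun h => hpσ (h ▸ hq)
            have := hch2 (by rw [Finset.coe_insert]; exact Set.mem_insert_of_mem _ hq)
              (by rw [Finset.coe_insert]; exact Set.mem_insert _ _) hqp
            rcases this with h | h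
            · exact Or.inl (le_trans h hplt.le)
            · -- p < q, so q is fixed by maximality
              have hpq : p < q := lt_of_le_of_ne h (Ne.symm hqp)
              have hqfix : c q = q := by
                by_contra h'
                exact not_lt_of_ge (hpmax (by simp [hT, hqS, h']) hpq.le) hpq
              exact Or.inr (hqfix ▸ hmono p hpS q hqS hpq.le)
          have hins : insert (c p) σ ∈ orderComplexOn P S := by
            refine mem_oc.mpr ⟨Finset.insert_nonempty _ _, ?_, ?_⟩
            · rw [Finset.coe_insert]
              exact Set.insert_subset (hmem p hpS) hsub
            · rw [Finset.coe_insert]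
              exact IsChain.insert hch fun b hb _ => (hcomp b hb).symm
          refine ⟨hins, ?_, ?_⟩
          · simp only [Finset.mem_insert]
            push_neg
            exact ⟨ne_of_lt hplt, hpσ⟩
          · refine mem_oc.mpr ⟨Finset.insert_nonempty _ _, ?_, ?_⟩
            · rw [Finset.coe_insert, Finset.coe_insert]
              exact Set.insert_subset hpS (Set.insert_subset (hmem p hpS) hsub)
            · rw [Finset.coe_insert, Finset.coe_insert]
              refine IsChain.insert ?_ ?_
              · have := (mem_oc.mp hins).2.2
                rwa [Finset.coe_insert] at this
              · intro b hb hbp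
                rcases Set.mem_insert_iff.mp hb with h | h
                · exact Or.inl (h ▸ hplt.le)
                · have hqp : b ≠ p := fun hh => hpσ (hh ▸ h)
                  exact (hch2 (by rw [Finset.coe_insert]; exact Set.mem_insert_of_mem _ h)
                    (by rw [Finset.coe_insert]; exact Set.mem_insert _ _) hqp).symm
      · rw [dlF_oc]
        refine ih (S \ {p}) ?_ ⟨hm, fun h => hpfix (Set.mem_singleton_iff.mp h ▸ hmfix)⟩
          hmfix ?_ (fun q hq => hle q hq.1) (fun q hq r hr h => hmono q hq.1 r hr.1 h)
          (fun q hq => hidem q hq.1) (fun q hq => hmin q hq.1)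
        · -- card decreases
          refine le_trans (Finset.card_le_card (t := T.erase p) fun q hq => ?_) ?_
          · simp only [Finset.mem_filter, Finset.mem_univ, true_and, Set.mem_diff,
              Set.mem_singleton_iff] at hq
            exact Finset.mem_erase.mpr ⟨hq.1.2, by simp [hT, hq.1.1, hq.2]⟩
          · rw [Finset.card_erase_of_mem hpT]
            omega
        · intro q hq
          refine ⟨hmem q hq.1, fun h => ?_⟩
          rw [Set.mem_singleton_iff] at h
          have : c p = p := by rw [← h]; rw [hidem q hq.1, h]
          exact hpfix this
end Closure

section Main
variable {L : Type*} [Lattice L] [Fintype L] [BoundedOrder L]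

def QS (x : L) : Set L := {p | ¬ (x ⊓ p = ⊥ ∧ x ⊔ p = ⊤) ∧ p ≠ ⊥ ∧ p ≠ ⊤}

lemma base_case (x b : L) (hx : ⊥ < x) (hx' : x < ⊤) (hb1 : x ⊓ b ≠ ⊥) (hb2 : x ⊔ b = ⊤) :
    Nonevasive (orderComplexOn L {q | q ∈ QS x ∧ q < b ∧ x ⊔ q ≠ ⊤}) := by
  set m := x ⊓ b with hm
  set S := {q | q ∈ QS x ∧ q < b ∧ x ⊔ q ≠ ⊤} with hS
  have hmx : m ≤ x := inf_le_left
  have hmb : m ≤ b := inf_le_right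
  have hmS : m ∈ S := by
    refine ⟨⟨?_, hb1, ne_top_of_lt (lt_of_le_of_lt hmx hx')⟩, ?_, ?_⟩
    · rintro ⟨h1, -⟩
      rw [inf_eq_right.mpr hmx] at h1
      exact hb1 h1
    · refine lt_of_le_of_ne hmb fun h => ?_
      have hbx : b ≤ x := h ▸ hmx
      rw [sup_eq_left.mpr hbx] at hb2
      exact (ne_top_of_lt hx') hb2
    · rw [hm, sup_inf_self]
      exact ne_top_of_lt hx'
  refine closure_nonevasive (fun q => q ⊔ m) m
    _ S le_rfl hmS (sup_idem m)
    ?_ (fun q _ => le_sup_left) (fun q _ r _ h => sup_le_sup_right h m)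
    (fun q _ => by show q ⊔ m ⊔ m = q ⊔ m; rw [sup_assoc, sup_idem]) (fun q _ => le_sup_right)
  intro q hq
  show q ⊔ m ∈ S
  obtain ⟨⟨hnc, hq0, hq1⟩, hqb, hqsup⟩ := hq
  have hsupeq : x ⊔ (q ⊔ m) = x ⊔ q := by
    rw [sup_left_comm, sup_eq_left.mpr hmx, sup_comm]
  refine ⟨⟨?_, ?_, ?_⟩, ?_, ?_⟩
  · rintro ⟨h1, -⟩
    refine hb1 (le_bot_iff.mp ?_)
    rw [← h1]
    exact le_inf hmx le_sup_right
  · intro h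
    exact hq0 (le_bot_iff.mp (h ▸ le_sup_left))
  · intro h
    exact hqsup (by rw [← hsupeq, h, sup_top_eq])
  · refine lt_of_le_of_ne (sup_le hqb.le hmb) fun h => ?_
    apply hqsup
    rw [← hsupeq, h, hb2]
  · rw [hsupeq]
    exact hqsup

lemma main_claim (x : L) (hx : ⊥ < x) (hx' : x < ⊤) :
    ∀ (n : ℕ) (B' : Finset L) (b : L), B'.card ≤ n →
      x ⊓ b ≠ ⊥ → x ⊔ b = ⊤ →
      (∀ q ∈ B', q ∈ QS x ∧ x ⊔ q = ⊤ ∧ q < b) →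
      Nonevasive (orderComplexOn L ({q | q ∈ QS x ∧ q < b ∧ x ⊔ q ≠ ⊤} ∪ ↑B')) := by
  intro n
  induction n with
  | zero =>
    intro B' b hcard hb1 hb2 hB'
    have he : B' = ∅ := Finset.card_eq_zero.mp (Nat.le_zero.mp hcard)
    simpa [he] using base_case x b hx hx' hb1 hb2
  | succ n ih =>
    intro B' b hcard hb1 hb2 hB'
    rcases Finset.eq_empty_or_nonempty B' with he | hne
    · simpa [he] using base_case x b hx hx' hb1 hb2
    · obtain ⟨b', hb'B, hmax⟩ := B'.exists_maximal hne
      obtain ⟨hb'Q, hb'sup, hb'lt⟩ := hB' b' hb'B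
      have hb'inf : x ⊓ b' ≠ ⊥ := fun h => hb'Q.1 ⟨h, hb'sup⟩
      set S := ({q | q ∈ QS x ∧ q < b ∧ x ⊔ q ≠ ⊤} ∪ ↑B' : Set L) with hS
      have hb'S : b' ∈ S := Or.inr (Finset.mem_coe.mpr hb'B)
      have htop : ∀ q ∈ S, ¬ b' < q := by
        rintro q (⟨-, -, hqsup⟩ | hqB) hlt
        · exact hqsup (top_unique (hb'sup ▸ sup_le_sup_left hlt.le x))
        · exact not_lt_of_ge (hmax (Finset.mem_coe.mp hqB) hlt.le) hlt
      refine Nonevasive.step _ b' (singleton_mem_oc hb'S) ?_ ?_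
      · rw [lkF_oc S b' hb'S htop]
        have hset : {q | q ∈ S ∧ q < b'} =
            ({q | q ∈ QS x ∧ q < b' ∧ x ⊔ q ≠ ⊤} ∪ ↑(B'.filter (· < b')) : Set L) := by
          ext q
          constructor
          · rintro ⟨hqS | hqB, hlt⟩
            · exact Or.inl ⟨hqS.1, hlt, hqS.2.2⟩
            · exact Or.inr (Finset.mem_coe.mpr
                (Finset.mem_filter.mpr ⟨Finset.mem_coe.mp hqB, hlt⟩))
          · rintro (⟨hQ, hlt, hsup⟩ | hqB)
            · exact ⟨Or.inl ⟨hQ, lt_trans hlt hb'lt, hsup⟩, hlt⟩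
            · obtain ⟨hqB', hlt⟩ := Finset.mem_filter.mp (Finset.mem_coe.mp hqB)
              exact ⟨Or.inr (Finset.mem_coe.mpr hqB'), hlt⟩
        rw [hset]
        refine ih (B'.filter (· < b')) b' ?_ hb'inf hb'sup ?_
        · refine le_trans (Finset.card_le_card (t := B'.erase b') fun q hq => ?_) ?_
          · obtain ⟨hqB', hlt⟩ := Finset.mem_filter.mp hq
            exact Finset.mem_erase.mpr ⟨ne_of_lt hlt, hqB'⟩
          · rw [Finset.card_erase_of_mem hb'B]
            omega
        · intro q hq
          obtain ⟨hqB', hlt⟩ := Finset.mem_filter.mp hq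
          obtain ⟨h1, h2, -⟩ := hB' q hqB'
          exact ⟨h1, h2, hlt⟩
      · rw [dlF_oc]
        have hset2 : S \ {b'} =
            ({q | q ∈ QS x ∧ q < b ∧ x ⊔ q ≠ ⊤} ∪ ↑(B'.erase b') : Set L) := by
          ext q
          constructor
          · rintro ⟨hqS | hqB, hne'⟩
            · exact Or.inl hqS
            · exact Or.inr (Finset.mem_coe.mpr (Finset.mem_erase.mpr
                ⟨fun h => hne' (Set.mem_singleton_iff.mpr h), Finset.mem_coe.mp hqB⟩))
          · rintro (hqS | hqB)
            · refine ⟨Or.inl hqS, fun h => hqS.2.2 ?_⟩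
              rw [Set.mem_singleton_iff] at h
              rw [h]
              exact hb'sup
            · obtain ⟨hne', hqB'⟩ := Finset.mem_erase.mp (Finset.mem_coe.mp hqB)
              exact ⟨Or.inr (Finset.mem_coe.mpr hqB'), fun h => hne' (Set.mem_singleton_iff.mp h)⟩
        rw [hset2]
        refine ih (B'.erase b') b ?_ hb1 hb2 ?_
        · rw [Finset.card_erase_of_mem hb'B]
          omega
        · intro q hq
          exact hB' q (Finset.mem_erase.mp hq).2
end Main


/-- Main theorem: for a finite bounded lattice L and x with ⊥ < x < ⊤, the order
complex of (L \ Co(x)) \ {⊥, ⊤} is nonevasive, in particular collapsible. -/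
theorem stmt_11 {L : Type*} [Lattice L] [Fintype L] [BoundedOrder L]
    (x : L) (hx : ⊥ < x) (hx' : x < ⊤) :
    Nonevasive (orderComplexOn L
        {p | ¬ (x ⊓ p = ⊥ ∧ x ⊔ p = ⊤) ∧ p ≠ ⊥ ∧ p ≠ ⊤}) ∧
    Collapsible (orderComplexOn L
        {p | ¬ (x ⊓ p = ⊥ ∧ x ⊔ p = ⊤) ∧ p ≠ ⊥ ∧ p ≠ ⊤}) := by
  show Nonevasive (orderComplexOn L (QS x)) ∧ Collapsible (orderComplexOn L (QS x))
  set Bt := Finset.univ.filter (fun q => q ∈ QS x ∧ x ⊔ q = ⊤) with hBt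
  have hunion : QS x = ({q | q ∈ QS x ∧ q < (⊤ : L) ∧ x ⊔ q ≠ ⊤} ∪ ↑Bt : Set L) := by
    ext q
    constructor
    · intro hq
      by_cases h : x ⊔ q = ⊤
      · exact Or.inr (Finset.mem_coe.mpr (Finset.mem_filter.mpr ⟨Finset.mem_univ q, hq, h⟩))
      · exact Or.inl ⟨hq, lt_top_iff_ne_top.mpr hq.2.2, h⟩
    · rintro (⟨h, -, -⟩ | h)
      · exact h
      · exact (Finset.mem_filter.mp (Finset.mem_coe.mp h)).2.1
  have hne : Nonevasive (orderComplexOn L (QS x)) := by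
    rw [hunion]
    refine main_claim x hx hx' Bt.card Bt ⊤ le_rfl (by simpa using hx.ne') (sup_top_eq x) ?_
    intro q hq
    obtain ⟨-, hQq, hsup⟩ := Finset.mem_filter.mp hq
    exact ⟨hQq, hsup, lt_top_iff_ne_top.mpr hQq.2.2⟩
  exact ⟨hne, hne.toCollapsible (isComplex_oc _)⟩
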